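/- Let F be a finite tree with root leaf r, and for each edge e let S_e ⊆ V(T) be given (cuts in another tree T). Fix w and orient F as above (e away from r iff w ∈ S_e), and assume out-degree ≤ 1 everywhere, with unique sink φ(w). Then for any two elements u, v with sinks φ(u), φ(v): an edge e of F separates φ(u) from φ(v) if and only if exactly one of u, v belongs to S_e. -/

import Mathlib

open SimpleGraph

section Aux

variable {V α : Type*} [DecidableEq V] {F : SimpleGraph V}

private lemma aux_path_length (hF : F.IsTree) {u v : V} (p : F.Walk u v) (hp : p.IsPath) :
    p.length = F.dist u v := by
  obtain ⟨q, hq⟩ := hF.isConnected.exists_walk_length_eq_dist u v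
  have hub : q.bypass.IsPath := q.bypass_isPath
  have h1 : p = q.bypass := (hF.existsUnique_path u v).unique hp hub
  have h2 : q.bypass.length ≤ q.length := q.length_bypass_le
  have h3 := SimpleGraph.dist_le p
  have h4 : p.length = q.bypass.length := by rw [h1]
  omega

private lemma aux_cross (a b : V) {u v : V} (p : F.Walk u v) :
    (F.deleteEdges {s(a,b)}).Reachable u v ∨
      ((F.deleteEdges {s(a,b)}).Reachable u a ∧ (F.deleteEdges {s(a,b)}).Reachable b v) ∨
      ((F.deleteEdges {s(a,b)}).Reachable u b ∧ (F.deleteEdges {s(a,b)}).Reachable a v) := by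
  induction p with
  | nil => exact Or.inl (Reachable.refl _)
  | @cons u c v h q ih =>
    by_cases he : s(u,c) = s(a,b)
    · rw [Sym2.eq_iff] at he
      rcases he with ⟨rfl, rfl⟩ | ⟨rfl, rfl⟩
      · rcases ih with h' | ⟨h1, h2⟩ | ⟨h1, h2⟩
        · exact Or.inr (Or.inl ⟨Reachable.refl _, h'⟩)
        · exact Or.inr (Or.inl ⟨Reachable.refl _, h2⟩)
        · exact Or.inl h2
      · rcases ih with h' | ⟨h1, h2⟩ | ⟨h1, h2⟩
        · exact Or.inr (Or.inr ⟨Reachable.refl _, h'⟩)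
        · exact Or.inl h2
        · exact Or.inr (Or.inr ⟨Reachable.refl _, h2⟩)
    · have hadj : (F.deleteEdges {s(a,b)}).Adj u c := by
        rw [deleteEdges_adj]
        exact ⟨h, by simpa using he⟩
      rcases ih with h' | ⟨h1, h2⟩ | ⟨h1, h2⟩
      · exact Or.inl (hadj.reachable.trans h')
      · exact Or.inr (Or.inl ⟨hadj.reachable.trans h1, h2⟩)
      · exact Or.inr (Or.inr ⟨hadj.reachable.trans h1, h2⟩)

private lemma aux_side (hconn : F.Connected) (a b : V) (v : V) :
    (F.deleteEdges {s(a,b)}).Reachable v a ∨ (F.deleteEdges {s(a,b)}).Reachable v b := by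
  obtain ⟨p⟩ := hconn v a
  rcases aux_cross a b p with h | ⟨h1, h2⟩ | ⟨h1, h2⟩
  · exact Or.inl h
  · exact Or.inl h1
  · exact Or.inr h1

omit [DecidableEq V] in
private lemma aux_bridge (hF : F.IsTree) {a b : V} (hab : F.Adj a b) :
    ¬ (F.deleteEdges {s(a,b)}).Reachable a b := by
  have := (isAcyclic_iff_forall_adj_isBridge.mp hF.IsAcyclic hab)
  exact isBridge_iff.mp this

variable (hF : F.IsTree) (r : V) (Sfun : Sym2 V → Set α) (D : α → V → V → Prop)
    (hD : ∀ (w : α) (a b : V), D w a b ↔ F.Adj a b ∧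
      (w ∈ Sfun s(a,b) ↔ ¬ (F.deleteEdges {s(a,b)}).Reachable b r))

include hF hD

/-- Every edge gets exactly one orientation (at least one direction holds). -/
private lemma aux_orient (w : α) {u v : V} (huv : F.Adj u v) :
    D w u v ∨ D w v u := by
  have hswap : s(v,u) = s(u,v) := Sym2.eq_swap
  have hbr : ¬ (F.deleteEdges {s(u,v)}).Reachable u v := aux_bridge hF huv
  by_cases hw : w ∈ Sfun s(u,v)
  · by_cases hv : (F.deleteEdges {s(u,v)}).Reachable v r
    · -- then u does not reach r
      have hu : ¬ (F.deleteEdges {s(u,v)}).Reachable u r := fun h => hbr (h.trans hv.symm)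
      refine Or.inr ((hD w v u).mpr ⟨huv.symm, ?_⟩)
      rw [hswap]
      exact iff_of_true hw hu
    · exact Or.inl ((hD w u v).mpr ⟨huv, iff_of_true hw hv⟩)
  · by_cases hv : (F.deleteEdges {s(u,v)}).Reachable v r
    · exact Or.inl ((hD w u v).mpr ⟨huv, iff_of_false hw (not_not_intro hv)⟩)
    · -- r reaches u or v; not v, so u
      have hu : (F.deleteEdges {s(u,v)}).Reachable u r := by
        rcases aux_side hF.isConnected u v r with h | h
        · exact h.symm
        · exact absurd h.symm hv
      refine Or.inr ((hD w v u).mpr ⟨huv.symm, ?_⟩)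
      rw [hswap]
      exact iff_of_false hw (not_not_intro hu)

variable (hout : ∀ (w : α) (a b c : V), D w a b → D w a c → b = c)
    (φ : α → V) (hφ : ∀ (w : α) (x : V), ¬ D w (φ w) x)

include hout hφ

/-- Core: the sink is never on the tail side of an oriented edge. -/
private lemma aux_core (w : α) :
    ∀ (n : ℕ) (a b : V), F.dist a (φ w) ≤ n → D w a b →
      ¬ (F.deleteEdges {s(a,b)}).Reachable a (φ w) := by
  intro n
  induction n with
  | zero =>
    intro a b hdist hDab _
    have ha : a = φ w := hF.isConnected.dist_eq_zero_iff.mp (Nat.le_zero.mp hdist)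
    exact hφ w b (ha ▸ hDab)
  | succ n ih =>
    intro a b hdist hDab hreach
    have hane : a ≠ φ w := fun h => hφ w b (h ▸ hDab)
    obtain ⟨p0⟩ := hreach
    have hp : p0.bypass.IsPath := p0.bypass_isPath
    obtain ⟨a', hadj, q, hpeq⟩ := Walk.exists_eq_cons_of_ne hane p0.bypass
    rw [hpeq, Walk.cons_isPath_iff] at hp
    obtain ⟨hq, hanotin⟩ := hp
    obtain ⟨hFa, hnot⟩ := deleteEdges_adj.mp hadj
    have hne_e : s(a,a') ≠ s(a,b) := by simpa using hnot
    have ha'b : a' ≠ b := fun h => hne_e (by rw [h])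
    -- orientation of the edge (a, a')
    have hD' : D w a' a := by
      rcases aux_orient hF r Sfun D hD w hFa with h | h
      · exact absurd (hout w a b a' hDab h).symm ha'b
      · exact h
    -- q avoids the edge s(a',a)
    have hqe : s(a',a) ∉ q.edges := fun h => hanotin (q.snd_mem_support_of_mem_edges h)
    -- transfer q to F.deleteEdges {s(a',a)}
    have hqsub : ∀ e ∈ q.edges, e ∈ (F.deleteEdges {s(a',a)}).edgeSet := by
      intro e he
      rw [edgeSet_deleteEdges]
      refine ⟨?_, ?_⟩
      · have := q.edges_subset_edgeSet he
        rw [edgeSet_deleteEdges] at this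
        exact this.1
      · intro hmem
        rw [Set.mem_singleton_iff] at hmem
        exact hqe (hmem ▸ he)
    have hreach' : (F.deleteEdges {s(a',a)}).Reachable a' (φ w) :=
      ⟨q.transfer _ hqsub⟩
    -- distance decreases
    have hqF : ∀ e ∈ q.edges, e ∈ F.edgeSet := fun e he => by
      have := q.edges_subset_edgeSet he
      rw [edgeSet_deleteEdges] at this
      exact this.1
    have hpF : ∀ e ∈ p0.bypass.edges, e ∈ F.edgeSet := fun e he => by
      have := p0.bypass.edges_subset_edgeSet he
      rw [edgeSet_deleteEdges] at this
      exact this.1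
    have hlenq : q.length = F.dist a' (φ w) := by
      have := aux_path_length hF (q.transfer F hqF) (hq.transfer hqF)
      rwa [Walk.length_transfer] at this
    have hlenp : p0.bypass.length = F.dist a (φ w) := by
      have hpP : p0.bypass.IsPath := p0.bypass_isPath
      have := aux_path_length hF (p0.bypass.transfer F hpF) (hpP.transfer hpF)
      rwa [Walk.length_transfer] at this
    have hlen : p0.bypass.length = q.length + 1 := by
      rw [hpeq, Walk.length_cons]
    have hdist' : F.dist a' (φ w) ≤ n := by omega
    exact ih a' a hdist' hD' hreach'

/-- Which side of an edge the sink is on, when `b` is the side away from `r`. -/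
private lemma aux_phiside {a b : V} (hab : F.Adj a b)
    (hside : ¬ (F.deleteEdges {s(a,b)}).Reachable b r) (w : α) :
    ((F.deleteEdges {s(a,b)}).Reachable b (φ w) ↔ w ∈ Sfun s(a,b)) := by
  have hswap : s(b,a) = s(a,b) := Sym2.eq_swap
  have hbr : ¬ (F.deleteEdges {s(a,b)}).Reachable a b := aux_bridge hF hab
  by_cases hw : w ∈ Sfun s(a,b)
  · have hDab : D w a b := (hD w a b).mpr ⟨hab, iff_of_true hw hside⟩
    have hna : ¬ (F.deleteEdges {s(a,b)}).Reachable a (φ w) :=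
      aux_core hF r Sfun D hD hout φ hφ w (F.dist a (φ w)) a b le_rfl hDab
    have : (F.deleteEdges {s(a,b)}).Reachable b (φ w) := by
      rcases aux_side hF.isConnected a b (φ w) with h | h
      · exact absurd h.symm hna
      · exact h.symm
    exact iff_of_true this hw
  · have hra : (F.deleteEdges {s(a,b)}).Reachable a r := by
      rcases aux_side hF.isConnected a b r with h | h
      · exact h.symm
      · exact absurd h.symm hside
    have hDba : D w b a := (hD w b a).mpr ⟨hab.symm, by rw [hswap]; exact iff_of_false hw (not_not_intro hra)⟩
    have hnb : ¬ (F.deleteEdges {s(b,a)}).Reachable b (φ w) :=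
      aux_core hF r Sfun D hD hout φ hφ w (F.dist b (φ w)) b a le_rfl hDba
    rw [hswap] at hnb
    exact iff_of_false hnb hw

private lemma aux_main {a b : V} (hab : F.Adj a b)
    (hside : ¬ (F.deleteEdges {s(a,b)}).Reachable b r) (x y : α) :
    (¬ (F.deleteEdges {s(a,b)}).Reachable (φ x) (φ y) ↔
      (x ∈ Sfun s(a,b) ↔ y ∉ Sfun s(a,b))) := by
  have hbr : ¬ (F.deleteEdges {s(a,b)}).Reachable a b := aux_bridge hF hab
  have hx := aux_phiside hF r Sfun D hD hout φ hφ hab hside x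
  have hy := aux_phiside hF r Sfun D hD hout φ hφ hab hside y
  have hxa : ¬ (F.deleteEdges {s(a,b)}).Reachable b (φ x) →
      (F.deleteEdges {s(a,b)}).Reachable a (φ x) := by
    intro h
    rcases aux_side hF.isConnected a b (φ x) with h' | h'
    · exact h'.symm
    · exact absurd h'.symm h
  have hya : ¬ (F.deleteEdges {s(a,b)}).Reachable b (φ y) →
      (F.deleteEdges {s(a,b)}).Reachable a (φ y) := by
    intro h
    rcases aux_side hF.isConnected a b (φ y) with h' | h'
    · exact h'.symm
    · exact absurd h'.symm h
  by_cases hxS : x ∈ Sfun s(a,b) <;> by_cases hyS : y ∈ Sfun s(a,b)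
  · refine iff_of_false (not_not_intro ?_) (by simp [hxS, hyS])
    exact (hx.mpr hxS).symm.trans (hy.mpr hyS)
  · refine iff_of_true ?_ (by simp [hxS, hyS])
    intro h
    exact hyS (hy.mp ((hx.mpr hxS).trans h))
  · refine iff_of_true ?_ (by simp [hxS, hyS])
    intro h
    exact hxS (hx.mp ((hy.mpr hyS).trans h.symm))
  · refine iff_of_false (not_not_intro ?_) (by simp [hxS, hyS])
    have h1 := hxa (fun h => hxS (hx.mp h))
    have h2 := hya (fun h => hyS (hy.mp h))
    exact h1.symm.trans h2

end Aux


/-- In the setting of the sink map `φ` (each element `w` orients the tree `F`: edge `e`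
away from the root leaf `r` iff `w ∈ S_e`, with out-degree at most 1 and sink `φ w`),
an edge `e` separates `φ x` from `φ y` iff exactly one of `x`, `y` belongs to `S_e`. -/
theorem stmt9 {V α : Type*} [Fintype V] [DecidableEq V]
    (F : SimpleGraph V) [DecidableRel F.Adj] (hF : F.IsTree)
    (r : V) (hr : F.degree r = 1)
    (Sfun : Sym2 V → Set α)
    (D : α → V → V → Prop)
    (hD : ∀ (w : α) (a b : V), D w a b ↔ F.Adj a b ∧
      (w ∈ Sfun s(a,b) ↔ ¬ (F.deleteEdges {s(a,b)}).Reachable b r))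
    (hout : ∀ (w : α) (a b c : V), D w a b → D w a c → b = c)
    (φ : α → V) (hφ : ∀ (w : α) (x : V), ¬ D w (φ w) x)
    (x y : α) :
    ∀ a b : V, F.Adj a b →
      (¬ (F.deleteEdges {s(a,b)}).Reachable (φ x) (φ y) ↔
        (x ∈ Sfun s(a,b) ↔ y ∉ Sfun s(a,b))) := by
  intro a b hab
  by_cases hside : (F.deleteEdges {s(a,b)}).Reachable b r
  · have hbr : ¬ (F.deleteEdges {s(a,b)}).Reachable a b := aux_bridge hF hab
    have hside' : ¬ (F.deleteEdges {s(b,a)}).Reachable a r := by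
      rw [Sym2.eq_swap (a := b)]
      exact fun h => hbr (h.trans hside.symm)
    have := aux_main hF r Sfun D hD hout φ hφ hab.symm hside' x y
    rwa [Sym2.eq_swap (a := b)] at this
  · exact aux_main hF r Sfun D hD hout φ hφ hab hside x y
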